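/- Let Σ be a predictive theory and A ⇒ B a predictive formula, and define Σ_A^B = {E + i ⇒ F + i | E ⇒ F ∈ Σ, i ∈ ℤ, l(A) − l(E) ≤ i ≤ u(B) − l(F)}. Then Σ ⊢ A ⇒ B if and only if A ⇒ B is provable from Σ_A^B using only the rules (Ax) and (Cut) (i.e., without the time-shift rule (Shf)). -/

import Mathlib

namespace TAI

variable {Y : Type*}

/-- Time shift of a set of time-annotated attributes: `M + j`. -/
def shiftS (M : Set (Y × ℤ)) (j : ℤ) : Set (Y × ℤ) :=
  (fun p : Y × ℤ => (p.1, p.2 + j)) '' M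

/-- Time shift of a finite set of time-annotated attributes: `A + j`. -/
def shiftF [DecidableEq Y] (A : Finset (Y × ℤ)) (j : ℤ) : Finset (Y × ℤ) :=
  A.image (fun p => (p.1, p.2 + j))

/-- An attribute implication over `Y` annotated by time points: a pair
`(A, B)` of finite subsets of `T_Y = Y × ℤ`, read as `A ⇒ B`. -/
abbrev Fml (Y : Type*) := Finset (Y × ℤ) × Finset (Y × ℤ)

/-- `A ⇒ B` is true in `M ⊆ T_Y`: for every `i ∈ ℤ`, `A + i ⊆ M` implies `B + i ⊆ M`. -/
def Holds [DecidableEq Y] (M : Set (Y × ℤ)) (φ : Fml Y) : Prop :=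
  ∀ i : ℤ, ↑(shiftF φ.1 i) ⊆ M → ↑(shiftF φ.2 i) ⊆ M

/-- The models of a theory `T`. -/
def Mods [DecidableEq Y] (T : Set (Fml Y)) : Set (Set (Y × ℤ)) :=
  {M | ∀ φ ∈ T, Holds M φ}

/-- Semantic entailment: `T ⊨ φ`. -/
def Entails [DecidableEq Y] (T : Set (Fml Y)) (φ : Fml Y) : Prop :=
  ∀ M ∈ Mods T, Holds M φ

/-- Semantic closure `[M]_Σ`. -/
def semClos [DecidableEq Y] (T : Set (Fml Y)) (M : Set (Y × ℤ)) : Set (Y × ℤ) :=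
  ⋂₀ {N | N ∈ Mods T ∧ M ⊆ N}

/-- Classical (time-point-free) truth: `M ⊨_PL A ⇒ B` iff `A ⊆ M` implies `B ⊆ M`. -/
def HoldsPL (M : Set (Y × ℤ)) (φ : Fml Y) : Prop :=
  ↑φ.1 ⊆ M → ↑φ.2 ⊆ M

/-- Classical models. -/
def ModsPL (T : Set (Fml Y)) : Set (Set (Y × ℤ)) :=
  {M | ∀ φ ∈ T, HoldsPL M φ}

/-- Classical semantic entailment `⊨_PL`. -/
def EntailsPL (T : Set (Fml Y)) (φ : Fml Y) : Prop :=
  ∀ M ∈ ModsPL T, HoldsPL M φ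

/-- `Σ^PL = {A + i ⇒ B + i | A ⇒ B ∈ Σ, i ∈ ℤ}`. -/
def shiftAll [DecidableEq Y] (T : Set (Fml Y)) : Set (Fml Y) :=
  {ψ | ∃ φ ∈ T, ∃ i : ℤ, ψ = (shiftF φ.1 i, shiftF φ.2 i)}

/-- One step of the syntactic closure construction. -/
def synStep [DecidableEq Y] (T : Set (Fml Y)) (M : Set (Y × ℤ)) : Set (Y × ℤ) :=
  M ∪ ⋃₀ {S | ∃ φ ∈ T, ∃ i : ℤ, ↑(shiftF φ.1 i) ⊆ M ∧ S = (↑(shiftF φ.2 i) : Set (Y × ℤ))}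

/-- `M_Σ^n`. -/
def synIter [DecidableEq Y] (T : Set (Fml Y)) (M : Set (Y × ℤ)) : ℕ → Set (Y × ℤ)
  | 0 => M
  | n + 1 => synStep T (synIter T M n)

/-- The syntactic closure `M_Σ^ω`. -/
def synClos [DecidableEq Y] (T : Set (Fml Y)) (M : Set (Y × ℤ)) : Set (Y × ℤ) :=
  ⋃ n : ℕ, synIter T M n

/-- Provability from `T` using the rules (Ax), (Cut) and (Shf). -/
inductive Prov [DecidableEq Y] (T : Set (Fml Y)) : Fml Y → Prop
  | hyp {φ : Fml Y} : φ ∈ T → Prov T φ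
  | ax (A B : Finset (Y × ℤ)) : Prov T (A ∪ B, A)
  | cut {A B C D : Finset (Y × ℤ)} :
      Prov T (A, B) → Prov T (B ∪ C, D) → Prov T (A ∪ C, D)
  | shf {A B : Finset (Y × ℤ)} (i : ℤ) :
      Prov T (A, B) → Prov T (shiftF A i, shiftF B i)

/-- Provability from `T` using only the rules (Ax) and (Cut) (no time shifts). -/
inductive ProvAC [DecidableEq Y] (T : Set (Fml Y)) : Fml Y → Prop
  | hyp {φ : Fml Y} : φ ∈ T → ProvAC T φ
  | ax (A B : Finset (Y × ℤ)) : ProvAC T (A ∪ B, A)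
  | cut {A B C D : Finset (Y × ℤ)} :
      ProvAC T (A, B) → ProvAC T (B ∪ C, D) → ProvAC T (A ∪ C, D)

/-- Provability from `T` using the rules (Ax) and (Cut_i). -/
inductive ProvCuti [DecidableEq Y] (T : Set (Fml Y)) : Fml Y → Prop
  | hyp {φ : Fml Y} : φ ∈ T → ProvCuti T φ
  | ax (A B : Finset (Y × ℤ)) : ProvCuti T (A ∪ B, A)
  | cuti {A B C D : Finset (Y × ℤ)} (i : ℤ) :
      ProvCuti T (A, shiftF B i) → ProvCuti T (B ∪ C, D) →
      ProvCuti T (A ∪ shiftF C i, shiftF D i)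

/-- Provability from `T` using the rules (Ref) and (Sim_i). -/
inductive ProvRS [DecidableEq Y] (T : Set (Fml Y)) : Fml Y → Prop
  | hyp {φ : Fml Y} : φ ∈ T → ProvRS T φ
  | ref (A : Finset (Y × ℤ)) : ProvRS T (A, A)
  | simi {A B C D : Finset (Y × ℤ)} (i : ℤ) :
      ProvRS T (A, shiftF B i) → ProvRS T (C, D) →
      ProvRS T (A ∪ shiftF (C \ B) i, shiftF D i)

/-- The closure operator induced by a closure system `S`. -/
def closOp (S : Set (Set (Y × ℤ))) (M : Set (Y × ℤ)) : Set (Y × ℤ) :=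
  ⋂₀ {N | N ∈ S ∧ M ⊆ N}

/-- The least time point occurring in a finite set (`0` for the empty set). -/
def lo (A : Finset (Y × ℤ)) : ℤ :=
  (A.image Prod.snd).min.untopD 0

/-- The greatest time point occurring in a finite set (`0` for the empty set). -/
def hi (A : Finset (Y × ℤ)) : ℤ :=
  (A.image Prod.snd).max.unbotD 0

/-- A formula `A ⇒ B` is predictive if `A ≠ ∅`, `B ≠ ∅`, and every time point in
`A` is less than or equal to every time point in `B`. -/
def Predictive (φ : Fml Y) : Prop :=
  φ.1.Nonempty ∧ φ.2.Nonempty ∧ ∀ p ∈ φ.1, ∀ q ∈ φ.2, p.2 ≤ q.2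

section Aux

variable [DecidableEq Y]

lemma mem_shiftF {A : Finset (Y × ℤ)} {i : ℤ} {p : Y × ℤ} :
    p ∈ shiftF A i ↔ ∃ q ∈ A, (q.1, q.2 + i) = p := by
  simp [shiftF, Finset.mem_image]

lemma shiftF_zero (A : Finset (Y × ℤ)) : shiftF A 0 = A := by
  ext p; simp [shiftF]

lemma shiftF_shiftF (A : Finset (Y × ℤ)) (i j : ℤ) :
    shiftF (shiftF A i) j = shiftF A (i + j) := by
  simp only [shiftF, Finset.image_image]
  congr 1; funext p; simp [add_assoc]

lemma shiftF_union (A B : Finset (Y × ℤ)) (i : ℤ) :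
    shiftF (A ∪ B) i = shiftF A i ∪ shiftF B i := by
  simp [shiftF, Finset.image_union]

lemma lo_le {A : Finset (Y × ℤ)} {p : Y × ℤ} (hp : p ∈ A) : lo A ≤ p.2 := by
  have hne : (A.image Prod.snd).Nonempty := ⟨p.2, Finset.mem_image_of_mem _ hp⟩
  have h1 : lo A = (A.image Prod.snd).min' hne := by
    rw [lo, ← Finset.coe_min' hne]; rfl
  rw [h1]
  exact Finset.min'_le _ _ (Finset.mem_image_of_mem _ hp)

lemma le_hi {A : Finset (Y × ℤ)} {p : Y × ℤ} (hp : p ∈ A) : p.2 ≤ hi A := by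
  have hne : (A.image Prod.snd).Nonempty := ⟨p.2, Finset.mem_image_of_mem _ hp⟩
  have h1 : hi A = (A.image Prod.snd).max' hne := by
    rw [hi, ← Finset.coe_max' hne]; rfl
  rw [h1]
  exact Finset.le_max' _ _ (Finset.mem_image_of_mem _ hp)

lemma exists_lo {A : Finset (Y × ℤ)} (hA : A.Nonempty) : ∃ p ∈ A, p.2 = lo A := by
  have hne : (A.image Prod.snd).Nonempty := hA.image _
  have h1 : lo A = (A.image Prod.snd).min' hne := by
    rw [lo, ← Finset.coe_min' hne]; rfl
  have := Finset.min'_mem _ hne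
  rw [Finset.mem_image] at this
  obtain ⟨p, hp, hp2⟩ := this
  exact ⟨p, hp, by rw [h1, hp2]⟩

/-- Forward-chaining reachability from a finite base `A` using formulas in `S`. -/
inductive Reach (S : Set (Fml Y)) (A : Finset (Y × ℤ)) : Y × ℤ → Prop
  | base {p : Y × ℤ} : p ∈ A → Reach S A p
  | step {φ : Fml Y} (hφ : φ ∈ S) (hprem : ∀ q ∈ φ.1, Reach S A q)
      {p : Y × ℤ} (hp : p ∈ φ.2) : Reach S A p

lemma Reach.mono_base {S : Set (Fml Y)} {A A' : Finset (Y × ℤ)} (h : A ⊆ A')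
    {p : Y × ℤ} (hp : Reach S A p) : Reach S A' p := by
  induction hp with
  | base hp => exact Reach.base (h hp)
  | step hφ hprem hp ih => exact Reach.step hφ ih hp

lemma Reach.cut {S : Set (Fml Y)} {A M : Finset (Y × ℤ)}
    (hM : ∀ q ∈ M, Reach S A q) {p : Y × ℤ} (hp : Reach S M p) : Reach S A p := by
  induction hp with
  | base hp => exact hM _ hp
  | step hφ hprem hp ih => exact Reach.step hφ ih hp

lemma ProvAC.congr {S : Set (Fml Y)} {A B A' B' : Finset (Y × ℤ)}
    (h : ProvAC S (A, B)) (hA : A = A') (hB : B = B') : ProvAC S (A', B') := by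
  subst hA; subst hB; exact h

lemma provAC_proj {S : Set (Fml Y)} {A B : Finset (Y × ℤ)} (h : B ⊆ A) :
    ProvAC S (A, B) :=
  (ProvAC.ax B A).congr (Finset.union_eq_right.mpr h) rfl

lemma provAC_refl {S : Set (Fml Y)} (A : Finset (Y × ℤ)) : ProvAC S (A, A) :=
  provAC_proj (le_refl A)

lemma provAC_trans {S : Set (Fml Y)} {A B C : Finset (Y × ℤ)}
    (h1 : ProvAC S (A, B)) (h2 : ProvAC S (B, C)) : ProvAC S (A, C) :=
  (h1.cut (h2.congr (Finset.union_empty B).symm rfl)).congr (Finset.union_empty A) rfl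

lemma provAC_aug {S : Set (Fml Y)} {A B : Finset (Y × ℤ)} (C : Finset (Y × ℤ))
    (h : ProvAC S (A, B)) : ProvAC S (A ∪ C, B ∪ C) :=
  h.cut (provAC_refl (B ∪ C))

lemma provAC_union {S : Set (Fml Y)} {A B₁ B₂ : Finset (Y × ℤ)}
    (h1 : ProvAC S (A, B₁)) (h2 : ProvAC S (A, B₂)) : ProvAC S (A, B₁ ∪ B₂) := by
  have h2' : ProvAC S (A, B₂ ∪ A) :=
    (provAC_aug A h2).congr (Finset.union_self A) rfl
  have h1' : ProvAC S (B₂ ∪ A, B₁ ∪ B₂) :=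
    (provAC_aug B₂ h1).congr (Finset.union_comm A B₂) rfl
  exact provAC_trans h2' h1'

lemma provAC_reach {S : Set (Fml Y)} {φ : Fml Y} (h : ProvAC S φ) :
    ∀ p ∈ φ.2, Reach S φ.1 p := by
  induction h with
  | hyp hφ =>
      intro p hp
      exact Reach.step hφ (fun q hq => Reach.base hq) hp
  | ax A B => exact fun p hp => Reach.base (Finset.mem_union_left _ hp)
  | cut h1 h2 ih1 ih2 =>
      intro p hp
      refine Reach.cut (M := _ ∪ _) ?_ (ih2 p hp)
      intro q hq
      rcases Finset.mem_union.mp hq with hq | hq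
      · exact (ih1 q hq).mono_base Finset.subset_union_left
      · exact Reach.base (Finset.mem_union_right _ hq)

lemma reach_provAC {S : Set (Fml Y)} {A : Finset (Y × ℤ)} {p : Y × ℤ}
    (h : Reach S A p) : ProvAC S (A, {p}) := by
  induction h with
  | base hp => exact provAC_proj (Finset.singleton_subset_iff.mpr hp)
  | @step φ hφ hprem p hp ih =>
      have hAE : ProvAC S (A, φ.1) := by
        classical
        have : ∀ E : Finset (Y × ℤ), (∀ q ∈ E, ProvAC S (A, ({q} : Finset _))) →
            ProvAC S (A, E) := by
          intro E
          induction E using Finset.induction_on with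
          | empty => intro _; exact provAC_proj (Finset.empty_subset A)
          | @insert a E ha ihE =>
              intro hE
              have h1 : ProvAC S (A, {a}) := hE a (Finset.mem_insert_self a E)
              have h2 : ProvAC S (A, E) := ihE (fun q hq => hE q (Finset.mem_insert_of_mem hq))
              exact (provAC_union h1 h2).congr rfl (Finset.insert_eq a E).symm
        exact this φ.1 (fun q hq => ih q hq)
      have hEF : ProvAC S (φ.1, φ.2) := ProvAC.hyp hφ
      exact provAC_trans (provAC_trans hAE hEF)
        (provAC_proj (Finset.singleton_subset_iff.mpr hp))

lemma subset_reach_provAC {S : Set (Fml Y)} {A B : Finset (Y × ℤ)}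
    (h : ∀ p ∈ B, Reach S A p) : ProvAC S (A, B) := by
  classical
  induction B using Finset.induction_on with
  | empty => exact provAC_proj (Finset.empty_subset A)
  | @insert a E ha ihE =>
      have h1 : ProvAC S (A, {a}) := reach_provAC (h a (Finset.mem_insert_self a E))
      have h2 : ProvAC S (A, E) := ihE (fun q hq => h q (Finset.mem_insert_of_mem hq))
      exact (provAC_union h1 h2).congr rfl (Finset.insert_eq a E).symm

lemma provAC_shiftAll_shift {T : Set (Fml Y)} {φ : Fml Y}
    (h : ProvAC (shiftAll T) φ) (i : ℤ) :
    ProvAC (shiftAll T) (shiftF φ.1 i, shiftF φ.2 i) := by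
  induction h with
  | @hyp ψ hψ =>
      obtain ⟨χ, hχ, j, rfl⟩ := hψ
      refine ProvAC.hyp ⟨χ, hχ, j + i, ?_⟩
      simp [shiftF_shiftF]
  | ax A B => exact (ProvAC.ax (shiftF A i) (shiftF B i)).congr (shiftF_union A B i).symm rfl
  | @cut A B C D h1 h2 ih1 ih2 =>
      exact (ih1.cut (ih2.congr (shiftF_union B C i) rfl)).congr (shiftF_union A C i).symm rfl

lemma prov_provAC_shiftAll {T : Set (Fml Y)} {φ : Fml Y} (h : Prov T φ) :
    ProvAC (shiftAll T) φ := by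
  induction h with
  | @hyp ψ hψ => exact ProvAC.hyp ⟨ψ, hψ, 0, by simp [shiftF_zero]⟩
  | ax A B => exact ProvAC.ax A B
  | cut h1 h2 ih1 ih2 => exact ih1.cut ih2
  | shf i h ih => exact provAC_shiftAll_shift ih i

lemma reach_lo_bound {S : Set (Fml Y)} (hS : ∀ ψ ∈ S, Predictive ψ)
    {A : Finset (Y × ℤ)} {p : Y × ℤ} (h : Reach S A p) : lo A ≤ p.2 := by
  induction h with
  | base hp => exact lo_le hp
  | @step φ hφ hprem p hp ih =>
      obtain ⟨h1, h2, h3⟩ := hS φ hφ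
      obtain ⟨q, hq⟩ := h1
      exact le_trans (ih q hq) (h3 q hq p hp)

lemma shiftAll_predictive {T : Set (Fml Y)} (hT : ∀ φ ∈ T, Predictive φ) :
    ∀ ψ ∈ shiftAll T, Predictive ψ := by
  rintro ψ ⟨χ, hχ, i, rfl⟩
  obtain ⟨h1, h2, h3⟩ := hT χ hχ
  refine ⟨h1.image _, h2.image _, ?_⟩
  rintro p hp q hq
  obtain ⟨e, he, rfl⟩ := mem_shiftF.mp hp
  obtain ⟨f, hf, rfl⟩ := mem_shiftF.mp hq
  have := h3 e he f hf
  simpa using by omega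

lemma reach_window {T : Set (Fml Y)} (hT : ∀ φ ∈ T, Predictive φ)
    {A B : Finset (Y × ℤ)} (hA : A.Nonempty) {p : Y × ℤ}
    (h : Reach (shiftAll T) A p) (hpB : p.2 ≤ hi B) :
    Reach {ψ : Fml Y | ∃ φ ∈ T, ∃ i : ℤ,
        lo A - lo φ.1 ≤ i ∧ i ≤ hi B - lo φ.2 ∧
        ψ = (shiftF φ.1 i, shiftF φ.2 i)} A p := by
  induction h with
  | base hp' => exact Reach.base hp'
  | @step φ hφ hprem p hp' ih =>
      obtain ⟨χ, hχ, i, rfl⟩ := hφ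
      obtain ⟨hne1, hne2, hpred⟩ := hT χ hχ
      obtain ⟨f, hf, hfp⟩ := mem_shiftF.mp hp'
      have hflo : lo χ.2 ≤ f.2 := lo_le hf
      have hp2 : p.2 = f.2 + i := by rw [← hfp]
      have hup : lo χ.2 + i ≤ hi B := by omega
      obtain ⟨e0, he0, he0lo⟩ := exists_lo hne1
      have hq0 : (e0.1, e0.2 + i) ∈ shiftF χ.1 i := mem_shiftF.mpr ⟨e0, he0, rfl⟩
      have hlow : lo A ≤ e0.2 + i :=
        reach_lo_bound (shiftAll_predictive hT) (hprem _ hq0)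
      refine Reach.step (φ := (shiftF χ.1 i, shiftF χ.2 i)) ?_ ?_ hp'
      · exact ⟨χ, hχ, i, by omega, by omega, rfl⟩
      intro q hq
      obtain ⟨e, he, rfl⟩ := mem_shiftF.mp hq
      obtain ⟨f0, hf0, hf0lo⟩ := exists_lo hne2
      have : e.2 ≤ lo χ.2 := hf0lo ▸ hpred e he f0 hf0
      exact ih _ hq (by simp; omega)


end Aux
/-- for a predictive theory `Σ` and predictive `A ⇒ B`,
`Σ ⊢ A ⇒ B` iff `A ⇒ B` is provable from `Σ_A^B` using only (Ax) and (Cut). -/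
theorem predictive_prov_iff_provAC [DecidableEq Y] [Fintype Y] [Nonempty Y]
    (T : Set (Fml Y)) (A B : Finset (Y × ℤ))
    (hT : ∀ φ ∈ T, Predictive φ) (hAB : Predictive (A, B)) :
    Prov T (A, B) ↔
      ProvAC {ψ : Fml Y | ∃ φ ∈ T, ∃ i : ℤ,
          lo A - lo φ.1 ≤ i ∧ i ≤ hi B - lo φ.2 ∧
          ψ = (shiftF φ.1 i, shiftF φ.2 i)} (A, B) := by
  constructor
  · intro h
    refine subset_reach_provAC (fun p hp => ?_)
    exact reach_window hT hAB.1
      (provAC_reach (prov_provAC_shiftAll h) p hp) (le_hi hp)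
  · intro h
    have aux : ∀ φ : Fml Y, ProvAC {ψ : Fml Y | ∃ φ ∈ T, ∃ i : ℤ,
          lo A - lo φ.1 ≤ i ∧ i ≤ hi B - lo φ.2 ∧
          ψ = (shiftF φ.1 i, shiftF φ.2 i)} φ → Prov T φ := by
      intro φ hφ
      induction hφ with
      | hyp hψ =>
          obtain ⟨χ, hχ, i, _, _, rfl⟩ := hψ
          exact Prov.shf i (Prov.hyp hχ)
      | ax A B => exact Prov.ax A B
      | cut h1 h2 ih1 ih2 => exact ih1.cut ih2
    exact aux (A, B) h

end TAI
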